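/- If a vector y ∈ ℝ^J satisfies positivity (y_j ≥ p_j for all j ∈ J) and non-overlapping (for all i ≠ j in J, y_j ≥ y_i + p_j or y_i ≥ y_j + p_i), then y satisfies the Queyranne inequalities (Q): for every subset S ⊆ J, ∑_{i∈S} p_i y_i ≥ g_p(S). -/
import Mathlib

/-- The job with maximal `y` in `S` satisfies `y j ≥ p(S)`. -/
lemma max_ge_sum {J : Type*} [Fintype J] (p y : J → ℝ)
    (hp : ∀ j, 0 < p j)
    (hpos : ∀ j, p j ≤ y j)
    (hnov : ∀ i j : J, i ≠ j → y j ≥ y i + p j ∨ y i ≥ y j + p i) :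
    ∀ S : Finset J, ∀ j ∈ S, (∀ i ∈ S, y i ≤ y j) → ∑ i ∈ S, p i ≤ y j := by
  classical
  intro S
  induction S using Finset.strongInduction with
  | _ S ih =>
    intro j hj hmax
    have hsplit : ∑ i ∈ S, p i = p j + ∑ i ∈ S.erase j, p i :=
      (Finset.add_sum_erase S p hj).symm
    rcases (S.erase j).eq_empty_or_nonempty with he | hne
    · rw [hsplit, he]
      simpa using hpos j
    · obtain ⟨j', hj', hmax'⟩ := Finset.exists_max_image (S.erase j) y hne
      have hjj' : j ≠ j' := fun h => Finset.ne_of_mem_erase hj' h.symm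
      have hle : y j' ≤ y j := hmax j' (Finset.mem_of_mem_erase hj')
      have hstep : y j ≥ y j' + p j := by
        rcases hnov j' j hjj'.symm with h | h
        · exact h
        · exfalso; linarith [hp j']
      have hIH : ∑ i ∈ S.erase j, p i ≤ y j' :=
        ih (S.erase j) (Finset.erase_ssubset hj) j' hj' fun i hi => hmax' i hi
      rw [hsplit]; linarith

theorem stmt_0 {J : Type*} [Fintype J] (p y : J → ℝ)
    (hp : ∀ j, 0 < p j)
    (hpos : ∀ j, p j ≤ y j)
    (hnov : ∀ i j : J, i ≠ j → y j ≥ y i + p j ∨ y i ≥ y j + p i) :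
    ∀ S : Finset J,
      ∑ i ∈ S, p i * y i ≥ (∑ j ∈ S, p j) ^ 2 / 2 + (∑ j ∈ S, (p j) ^ 2) / 2 := by
  classical
  intro S
  induction S using Finset.strongInduction with
  | _ S ih =>
    rcases S.eq_empty_or_nonempty with rfl | hne
    · simp
    · obtain ⟨j, hj, hmax⟩ := Finset.exists_max_image S y hne
      have hyj : ∑ i ∈ S, p i ≤ y j := max_ge_sum p y hp hpos hnov S j hj hmax
      have hIH := ih (S.erase j) (Finset.erase_ssubset hj)
      have h1 : ∑ i ∈ S, p i * y i = p j * y j + ∑ i ∈ S.erase j, p i * y i :=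
        (Finset.add_sum_erase S (fun i => p i * y i) hj).symm
      have h2 : ∑ i ∈ S, p i = p j + ∑ i ∈ S.erase j, p i :=
        (Finset.add_sum_erase S p hj).symm
      have h3 : ∑ i ∈ S, (p i) ^ 2 = (p j) ^ 2 + ∑ i ∈ S.erase j, (p i) ^ 2 :=
        (Finset.add_sum_erase S (fun i => (p i) ^ 2) hj).symm
      have hpyj : p j * (∑ i ∈ S, p i) ≤ p j * y j :=
        mul_le_mul_of_nonneg_left hyj (hp j).le
      rw [h1]
      rw [h2] at hpyj ⊢
      rw [h3]
      nlinarith [hIH, hpyj]
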